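/- Let ζ be a Poisson point process on (0,1)^d with constant intensity λ > 0, and let k ∈ ℕ with k ≤ (λ/4)^{1/d}. Then with probability at least 1 − exp(−(λ/4)^{1/d}) there exist distinct points Z₁,…,Z_k of ζ such that D₀(Z₁,…,Z_k) < d, where D₀ is the shortest ℓ¹-length of a path from the origin visiting all of Z₁,…,Z_k. -/

import Mathlib

open MeasureTheory ProbabilityTheory

/-- ℓ¹ length of the path `0 → l₀ → l₁ → ⋯` in `ℝ^d`. -/
def pathLenR (d : ℕ) (l : List (Fin d → ℝ)) : ℝ :=
  (List.zipWith (fun x y : Fin d → ℝ => ∑ i, |x i - y i|) ((fun _ => 0) :: l) l).sum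

/-- Elementary Poisson tail estimate. -/
lemma stmt15_aux_sum (k : ℕ) (μ M : ℝ) (hk1 : 1 ≤ (k : ℝ)) (hkM : (k : ℝ) ≤ M)
    (hμ : 4 * M ≤ μ) :
    Real.exp (-μ) * ∑ m ∈ Finset.range k, μ ^ m / m.factorial ≤ Real.exp (-M) := by
  have hM : 0 < M := lt_of_lt_of_le (by linarith) hkM
  have hμpos : 0 < μ := by linarith
  have hkpos : 0 < (k : ℝ) := by linarith
  set q : ℝ := μ / (2 * k) with hq
  have hμq : μ = q * (2 * k) := by rw [hq, div_mul_cancel₀]; positivity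
  have hq2 : 2 ≤ q := by
    rw [hq, le_div_iff₀ (by positivity)]
    nlinarith
  have hq1 : (1 : ℝ) ≤ q := by linarith
  have hqpos : (0 : ℝ) < q := by linarith
  have hsum : ∑ m ∈ Finset.range k, μ ^ m / m.factorial
      ≤ q ^ (k - 1) * Real.exp (2 * k) := by
    calc ∑ m ∈ Finset.range k, μ ^ m / m.factorial
        ≤ ∑ m ∈ Finset.range k, q ^ (k - 1) * ((2 * (k : ℝ)) ^ m / m.factorial) := by
          refine Finset.sum_le_sum fun m hm => ?_
          have hmk : m ≤ k - 1 := by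
            have := Finset.mem_range.1 hm
            omega
          have h1 : μ ^ m = q ^ m * (2 * (k : ℝ)) ^ m := by
            rw [hμq, mul_pow]
          have h2 : q ^ m ≤ q ^ (k - 1) := pow_le_pow_right₀ hq1 hmk
          rw [h1, mul_div_assoc]
          have h3 : (0 : ℝ) ≤ (2 * (k : ℝ)) ^ m / m.factorial := by positivity
          exact mul_le_mul_of_nonneg_right h2 h3
      _ = q ^ (k - 1) * ∑ m ∈ Finset.range k, (2 * (k : ℝ)) ^ m / m.factorial := by
          rw [Finset.mul_sum]
      _ ≤ q ^ (k - 1) * Real.exp (2 * k) := by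
          have := Real.sum_le_exp_of_nonneg (x := 2 * (k : ℝ)) (by positivity) k
          exact mul_le_mul_of_nonneg_left this (by positivity)
  have hlogq : Real.log q ≤ q / 2 := by
    have h1 : Real.log (q / 2) ≤ q / 2 - 1 := Real.log_le_sub_one_of_pos (by linarith)
    have h2 : Real.log q = Real.log (q / 2) + Real.log 2 := by
      rw [← Real.log_mul (by linarith) (by norm_num)]
      norm_num
    have h3 : Real.log 2 ≤ 1 := by
      have := Real.log_two_lt_d9
      linarith
    linarith
  have hpow : q ^ (k - 1) ≤ Real.exp (μ / 4) := by
    have hcast : ((k - 1 : ℕ) : ℝ) ≤ (k : ℝ) := by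
      exact_mod_cast Nat.cast_le.2 (Nat.sub_le k 1)
    have hlq0 : 0 ≤ Real.log q := Real.log_nonneg hq1
    have h1 : ((k - 1 : ℕ) : ℝ) * Real.log q ≤ (k : ℝ) * (q / 2) := by
      calc ((k - 1 : ℕ) : ℝ) * Real.log q ≤ (k : ℝ) * Real.log q :=
            mul_le_mul_of_nonneg_right hcast hlq0
        _ ≤ (k : ℝ) * (q / 2) := mul_le_mul_of_nonneg_left hlogq (by positivity)
    have h2 : (k : ℝ) * (q / 2) = μ / 4 := by
      rw [hμq]; field_simp; ring
    calc q ^ (k - 1) = Real.exp (Real.log q) ^ (k - 1) := by rw [Real.exp_log hqpos]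
      _ = Real.exp (((k - 1 : ℕ) : ℝ) * Real.log q) := (Real.exp_nat_mul _ _).symm
      _ ≤ Real.exp (μ / 4) := Real.exp_le_exp.2 (by rw [← h2]; exact h1)
  calc Real.exp (-μ) * ∑ m ∈ Finset.range k, μ ^ m / m.factorial
      ≤ Real.exp (-μ) * (Real.exp (μ / 4) * Real.exp (2 * k)) := by
        refine mul_le_mul_of_nonneg_left ?_ (Real.exp_nonneg _)
        calc ∑ m ∈ Finset.range k, μ ^ m / m.factorial
            ≤ q ^ (k - 1) * Real.exp (2 * k) := hsum
          _ ≤ Real.exp (μ / 4) * Real.exp (2 * k) :=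
              mul_le_mul_of_nonneg_right hpow (Real.exp_nonneg _)
    _ ≤ Real.exp (-M) := by
        rw [← Real.exp_add, ← Real.exp_add]
        exact Real.exp_le_exp.2 (by linarith)

/-- Walk length bound for a sorted list of points in the tube. -/
lemma stmt15_walk (d k : ℕ) (hd : 0 < d) (i₀ : Fin d)
    (l : List (Fin d → ℝ)) : ∀ (p : Fin d → ℝ) (u : ℝ),
    (∀ x ∈ l, ∀ i, 0 ≤ x i ∧ x i ≤ if i = i₀ then (1 : ℝ) else 1 / (k : ℝ)) →
    (∀ i, 0 ≤ p i ∧ p i ≤ if i = i₀ then (1 : ℝ) else 1 / (k : ℝ)) →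
    (∀ x ∈ l, p i₀ ≤ x i₀) →
    l.Pairwise (fun x y => x i₀ ≤ y i₀) →
    (∀ x ∈ l, x i₀ ≤ u) → p i₀ ≤ u →
    (List.zipWith (fun x y : Fin d → ℝ => ∑ i, |x i - y i|) (p :: l) l).sum
      ≤ (u - p i₀) + l.length * (((d : ℝ) - 1) / k) := by
  induction l with
  | nil =>
    intro p u _ _ _ _ _ hpu
    simp only [List.zipWith_nil_right, List.sum_nil, List.length_nil, Nat.cast_zero, zero_mul,
      add_zero]
    linarith
  | cons x l ih =>
    intro p u hT hp hsep hpair hu hpu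
    have hxT := hT x (List.mem_cons_self)
    have hstep : (∑ i, |p i - x i|) ≤ (x i₀ - p i₀) + ((d : ℝ) - 1) / k := by
      rw [← Finset.add_sum_erase _ _ (Finset.mem_univ i₀)]
      have h1 : |p i₀ - x i₀| = x i₀ - p i₀ := by
        rw [abs_sub_comm]
        exact abs_of_nonneg (by linarith [hsep x (List.mem_cons_self)])
      have h2 : ∑ i ∈ Finset.univ.erase i₀, |p i - x i| ≤ ((d : ℝ) - 1) / k := by
        have hcard : (Finset.univ.erase i₀).card = d - 1 := by
          rw [Finset.card_erase_of_mem (Finset.mem_univ _), Finset.card_univ, Fintype.card_fin]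
        calc ∑ i ∈ Finset.univ.erase i₀, |p i - x i|
            ≤ (Finset.univ.erase i₀).card • ((1 : ℝ) / k) := by
              refine Finset.sum_le_card_nsmul _ _ _ fun i hi => ?_
              have hine : i ≠ i₀ := (Finset.mem_erase.1 hi).1
              have hpi := hp i
              have hxi := hxT i
              rw [if_neg hine] at hpi hxi
              rw [abs_le]
              exact ⟨by linarith [hpi.1, hpi.2, hxi.1, hxi.2],
                by linarith [hpi.1, hpi.2, hxi.1, hxi.2]⟩
          _ = ((d : ℝ) - 1) / k := by
              rw [hcard, nsmul_eq_mul]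
              have hdc : ((d - 1 : ℕ) : ℝ) = (d : ℝ) - 1 := by
                have h1d : 1 ≤ d := hd
                push_cast [Nat.cast_sub h1d]
                ring
              rw [hdc]
              ring
      linarith
    have ihx := ih x u (fun y hy => hT y (List.mem_cons_of_mem _ hy)) hxT
      (fun y hy => (List.pairwise_cons.1 hpair).1 y hy)
      (List.pairwise_cons.1 hpair).2
      (fun y hy => hu y (List.mem_cons_of_mem _ hy))
      (hu x (List.mem_cons_self))
    have hzw : (List.zipWith (fun x y : Fin d → ℝ => ∑ i, |x i - y i|) (p :: x :: l)
        (x :: l)).sum = (∑ i, |p i - x i|) +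
        (List.zipWith (fun x y : Fin d → ℝ => ∑ i, |x i - y i|) (x :: l) l).sum := by
      simp [List.zipWith]
    rw [hzw]
    have hlen : ((x :: l).length : ℝ) = (l.length : ℝ) + 1 := by
      simp
    rw [hlen]
    nlinarith [ihx, hstep]

/-- Facts about the running maximum of the `i₀` coordinates. -/
lemma stmt15_foldr (d : ℕ) (i₀ : Fin d) (l : List (Fin d → ℝ))
    (h : ∀ x ∈ l, x i₀ < 1) :
    (0 ≤ l.foldr (fun x m => max (x i₀) m) 0 ∧
      ∀ x ∈ l, x i₀ ≤ l.foldr (fun x m => max (x i₀) m) 0) ∧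
      l.foldr (fun x m => max (x i₀) m) 0 < 1 := by
  induction l with
  | nil => simp
  | cons x l ihl =>
    have hIH := ihl (fun y hy => h y (List.mem_cons_of_mem _ hy))
    simp only [List.foldr_cons]
    refine ⟨⟨le_max_of_le_right hIH.1.1, ?_⟩, ?_⟩
    · intro y hy
      rcases List.mem_cons.1 hy with rfl | hy
      · exact le_max_left _ _
      · exact le_max_of_le_right (hIH.1.2 y hy)
    · exact max_lt (h x (List.mem_cons_self)) hIH.2

/-- for a Poisson point process `ζ` on `(0,1)^d` with intensity
`λ > 0` and `k ≤ (λ/4)^{1/d}`, with probability at least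
`1 − exp(−(λ/4)^{1/d})` there exist `k` distinct points `Z₁,…,Z_k` of `ζ`
such that the shortest ℓ¹ path from the origin visiting all of them has
length `< d` (i.e. `D₀(Z₁,…,Z_k) < d`). -/
theorem stmt15 (d : ℕ) (hd : 0 < d) (lam : ℝ) (hlam : 0 < lam)
    (k : ℕ) (hk : 0 < k) (hkle : (k : ℝ) ≤ (lam / 4) ^ ((1 : ℝ) / d))
    (Ω : Type*) [MeasurableSpace Ω] (P : Measure Ω) [IsProbabilityMeasure P]
    (ζ : Ω → Set (Fin d → ℝ))
    (hsupp : ∀ ω, ζ ω ⊆ {y | ∀ i, 0 < y i ∧ y i < 1})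
    (hPPP : ∀ (n : ℕ) (A : Fin n → Set (Fin d → ℝ)),
      (∀ i, MeasurableSet (A i)) →
      (∀ i, A i ⊆ {y | ∀ j, 0 < y j ∧ y j < 1}) →
      Pairwise (Function.onFun Disjoint A) →
      iIndepFun (fun i ω => (ζ ω ∩ A i).ncard) P ∧
      ∀ i, ∀ m : ℕ,
        P {ω | (ζ ω ∩ A i).Finite ∧ (ζ ω ∩ A i).ncard = m} =
          ENNReal.ofReal (Real.exp (-(lam * (volume (A i)).toReal)) *
            (lam * (volume (A i)).toReal) ^ m / m.factorial)) :
    ENNReal.ofReal (1 - Real.exp (-((lam / 4) ^ ((1 : ℝ) / d)))) ≤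
      P {ω | ∃ l : List (Fin d → ℝ), l.Nodup ∧ l.length = k ∧
        (∀ p ∈ l, p ∈ ζ ω) ∧ pathLenR d l < d} := by
  set M : ℝ := (lam / 4) ^ ((1 : ℝ) / d) with hMdef
  have hlam4 : (0:ℝ) < lam / 4 := by linarith
  have hM0 : 0 < M := Real.rpow_pos_of_pos hlam4 _
  have hk1 : (1:ℝ) ≤ (k:ℝ) := by exact_mod_cast hk
  have hkpos : (0:ℝ) < (k:ℝ) := by linarith
  have hMd : M ^ d = lam / 4 := by
    rw [hMdef, ← Real.rpow_natCast ((lam / 4) ^ ((1:ℝ)/d)) d,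
      ← Real.rpow_mul hlam4.le]
    rw [one_div, inv_mul_cancel₀ (by exact_mod_cast hd.ne' : ((d:ℝ) ≠ 0)), Real.rpow_one]
  set i₀ : Fin d := ⟨0, hd⟩ with hi₀
  set c : Fin d → ℝ := fun i => if i = i₀ then (1:ℝ) else 1 / (k:ℝ) with hc
  have hc0 : ∀ i, 0 < c i := by
    intro i; rw [hc]; dsimp only
    split <;> positivity
  have hc1 : ∀ i, c i ≤ 1 := by
    intro i; rw [hc]; dsimp only
    split
    · exact le_refl _
    · rw [div_le_one hkpos]; exact hk1
  set T : Set (Fin d → ℝ) := Set.univ.pi fun i => Set.Ioo 0 (c i) with hT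
  have hTmeas : MeasurableSet T := MeasurableSet.univ_pi fun i => measurableSet_Ioo
  have hTsub : T ⊆ {y | ∀ j, 0 < y j ∧ y j < 1} := by
    intro y hy j
    have := hy j (Set.mem_univ j)
    exact ⟨this.1, lt_of_lt_of_le this.2 (hc1 j)⟩
  -- volume of T
  have hvol : (volume T).toReal = (1 / (k:ℝ)) ^ (d - 1) := by
    rw [hT, volume_pi_pi]
    have h1 : ∀ i, volume (Set.Ioo (0:ℝ) (c i)) = ENNReal.ofReal (c i) := by
      intro i; rw [Real.volume_Ioo, sub_zero]
    rw [Finset.prod_congr rfl fun i _ => h1 i, ENNReal.toReal_prod]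
    have h2 : ∀ i, (ENNReal.ofReal (c i)).toReal = c i := fun i =>
      ENNReal.toReal_ofReal (hc0 i).le
    rw [Finset.prod_congr rfl fun i _ => h2 i]
    rw [← Finset.prod_erase_mul _ _ (Finset.mem_univ i₀)]
    simp only [hc]
    rw [if_true, mul_one,
      Finset.prod_congr rfl (fun i hi => if_neg (Finset.mem_erase.1 hi).1),
      Finset.prod_const, Finset.card_erase_of_mem (Finset.mem_univ _), Finset.card_univ,
      Fintype.card_fin]
  set μ : ℝ := lam * (volume T).toReal with hμdef
  have hμval : μ = lam * (1 / (k:ℝ)) ^ (d - 1) := by rw [hμdef, hvol]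
  have hμ4M : 4 * M ≤ μ := by
    have hkd : (k:ℝ) ^ (d - 1) ≤ M ^ (d - 1) := pow_le_pow_left₀ (by positivity) hkle _
    have hkdpos : (0:ℝ) < (k:ℝ) ^ (d - 1) := by positivity
    have hMsplit : M ^ d = M ^ (d - 1) * M := by
      rw [← pow_succ]; congr 1; omega
    have hlameq : lam = 4 * (M ^ (d - 1) * M) := by
      rw [← hMsplit, hMd]; ring
    have key : μ * (k:ℝ)^(d-1) = 4 * M * (k:ℝ)^(d-1) + 4 * M * (M^(d-1) - (k:ℝ)^(d-1)) := by
      have hk' : (1 / (k:ℝ)) ^ (d - 1) * (k:ℝ) ^ (d - 1) = 1 := by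
        rw [← mul_pow, one_div, inv_mul_cancel₀ hkpos.ne', one_pow]
      rw [hμval, mul_assoc, hk', hlameq]; ring
    have h4 : 0 ≤ 4 * M * (M^(d-1) - (k:ℝ)^(d-1)) := by
      apply mul_nonneg (by linarith)
      linarith
    have h5 : 4 * M * (k:ℝ)^(d-1) ≤ μ * (k:ℝ)^(d-1) := by linarith
    exact le_of_mul_le_mul_right h5 hkdpos
  -- distribution of the count in T
  obtain ⟨-, hdist⟩ := hPPP 1 (fun _ => T) (fun _ => hTmeas) (fun _ => hTsub)
    (fun i j hij => absurd (Subsingleton.elim i j) hij)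
  have hPm : ∀ m : ℕ, P {ω | (ζ ω ∩ T).Finite ∧ (ζ ω ∩ T).ncard = m} =
      ENNReal.ofReal (Real.exp (-μ) * μ ^ m / m.factorial) := fun m => hdist 0 m
  set E : Set Ω := {ω | ∃ l : List (Fin d → ℝ), l.Nodup ∧ l.length = k ∧
    (∀ p ∈ l, p ∈ ζ ω) ∧ pathLenR d l < d} with hE
  set U : ℕ → Set Ω := fun m => {ω | (ζ ω ∩ T).Finite ∧ (ζ ω ∩ T).ncard = m} with hU
  -- the covering step
  have hcover : (Set.univ : Set Ω) ⊆ E ∪ ⋃ m ∈ Finset.range k, U m := by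
    intro ω _
    by_cases hω : ω ∈ ⋃ m ∈ Finset.range k, U m
    · exact Or.inr hω
    left
    -- extract a finset of k points of ζ ω ∩ T
    have hF : ∃ F : Finset (Fin d → ℝ), ↑F ⊆ ζ ω ∩ T ∧ F.card = k := by
      rcases (ζ ω ∩ T).finite_or_infinite with hfin | hinf
      · have hge : k ≤ (ζ ω ∩ T).ncard := by
          by_contra hlt
          push_neg at hlt
          exact hω (Set.mem_biUnion (Finset.mem_range.2 hlt) ⟨hfin, rfl⟩)
        obtain ⟨t, hts, htc⟩ := Set.exists_subset_card_eq hge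
        have htfin : t.Finite := Set.finite_of_ncard_ne_zero (by omega)
        refine ⟨htfin.toFinset, by simpa using hts, ?_⟩
        rw [← Set.ncard_eq_toFinset_card t htfin, htc]
      · obtain ⟨F, hFs, hFc⟩ := hinf.exists_subset_card_eq k
        exact ⟨F, hFs, hFc⟩
    obtain ⟨F, hFsub, hFcard⟩ := hF
    set le : (Fin d → ℝ) → (Fin d → ℝ) → Bool := fun x y => decide (x i₀ ≤ y i₀) with hle
    set l : List (Fin d → ℝ) := F.toList.mergeSort le with hl
    have hperm : l.Perm F.toList := List.mergeSort_perm F.toList le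
    have hmem : ∀ x, x ∈ l → x ∈ ζ ω ∩ T := by
      intro x hx
      exact hFsub (by simpa using hperm.mem_iff.1 hx)
    have hnodup : l.Nodup := hperm.nodup_iff.2 F.nodup_toList
    have hlength : l.length = k := by
      rw [hperm.length_eq, Finset.length_toList, hFcard]
    have hsorted : l.Pairwise fun x y => x i₀ ≤ y i₀ := by
      have h := List.pairwise_mergeSort (le := le)
        (fun a b c hab hbc => by
          simp only [hle, decide_eq_true_eq] at *
          exact le_trans hab hbc)
        (fun a b => by
          simp only [hle, Bool.or_eq_true, decide_eq_true_eq]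
          exact le_total _ _)
        F.toList
      rw [← hl] at h
      exact h.imp fun hab => by simpa [hle, decide_eq_true_eq] using hab
    refine ⟨l, hnodup, hlength, fun p hp => (hmem p hp).1, ?_⟩
    -- bound the path length
    have hufacts := stmt15_foldr d i₀ l (fun x hx => by
      have h := (hmem x hx).2 i₀ (Set.mem_univ i₀)
      calc x i₀ < c i₀ := h.2
        _ ≤ 1 := hc1 i₀)
    set u : ℝ := l.foldr (fun x m => max (x i₀) m) 0 with hu'
    obtain ⟨⟨hu0, huall⟩, hu1⟩ := hufacts
    have hwalk := stmt15_walk d k hd i₀ l (fun _ => 0) u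
      (fun x hx i => by
        have h := (hmem x hx).2 i (Set.mem_univ i)
        constructor
        · exact h.1.le
        · have := h.2
          rw [hc] at this
          exact this.le)
      (fun i => ⟨le_refl 0, le_of_lt (by
        have := hc0 i
        rw [hc] at this
        exact this)⟩)
      (fun x hx => by
        have h := (hmem x hx).2 i₀ (Set.mem_univ i₀)
        exact h.1.le)
      hsorted huall hu0
    have hpath : pathLenR d l ≤ u + (l.length : ℝ) * (((d:ℝ) - 1) / k) := by
      have : pathLenR d l = (List.zipWith (fun x y : Fin d → ℝ => ∑ i, |x i - y i|)
          ((fun _ => (0:ℝ)) :: l) l).sum := rfl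
      rw [this]
      simpa using hwalk
    have hfinal : u + (l.length : ℝ) * (((d:ℝ) - 1) / k) < d := by
      rw [hlength]
      have heq : (k : ℝ) * (((d:ℝ) - 1) / k) = (d:ℝ) - 1 := by
        field_simp
      rw [heq]
      linarith
    exact lt_of_le_of_lt hpath hfinal
  -- measure computation
  have h1 : (1 : ENNReal) ≤ P E + ∑ m ∈ Finset.range k, P (U m) := by
    calc (1 : ENNReal) = P Set.univ := (measure_univ).symm
      _ ≤ P (E ∪ ⋃ m ∈ Finset.range k, U m) := measure_mono hcover
      _ ≤ P E + P (⋃ m ∈ Finset.range k, U m) := measure_union_le _ _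
      _ ≤ P E + ∑ m ∈ Finset.range k, P (U m) := by
          exact add_le_add_right (measure_biUnion_finset_le _ _) _
  have h2 : ∑ m ∈ Finset.range k, P (U m) ≤ ENNReal.ofReal (Real.exp (-M)) := by
    have hPmsum : ∑ m ∈ Finset.range k, P (U m)
        = ENNReal.ofReal (∑ m ∈ Finset.range k, Real.exp (-μ) * μ ^ m / m.factorial) := by
      rw [ENNReal.ofReal_sum_of_nonneg (fun m _ => by positivity)]
      exact Finset.sum_congr rfl fun m _ => hPm m
    rw [hPmsum]
    apply ENNReal.ofReal_le_ofReal
    have hμ0 : 0 ≤ μ := by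
      rw [hμdef]
      positivity
    have : ∑ m ∈ Finset.range k, Real.exp (-μ) * μ ^ m / m.factorial
        = Real.exp (-μ) * ∑ m ∈ Finset.range k, μ ^ m / m.factorial := by
      rw [Finset.mul_sum]
      exact Finset.sum_congr rfl fun m _ => by ring
    rw [this]
    exact stmt15_aux_sum k μ M hk1 hkle hμ4M
  have h3 : ENNReal.ofReal (1 - Real.exp (-M)) = 1 - ENNReal.ofReal (Real.exp (-M)) := by
    rw [ENNReal.ofReal_sub _ (Real.exp_nonneg _), ENNReal.ofReal_one]
  rw [h3]
  calc (1 : ENNReal) - ENNReal.ofReal (Real.exp (-M))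
      ≤ 1 - ∑ m ∈ Finset.range k, P (U m) := tsub_le_tsub_left h2 1
    _ ≤ P E := by
        rw [tsub_le_iff_right]
        exact h1.trans (by rw [add_comm])
  -- done
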